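/- arXiv:2206.06455 — 11 statements merged into one kernel-verified Lean document; each statement's English description precedes it below -/
import Mathlib

section
/- Let p ∈ Y be the solution of ⟨A p, v⟩ = ⟨B u, v⟩ for all v ∈ Y (i.e., p = A⁻¹ B u). Then ⟨B u, p⟩ ≥ c₁ᴬ (c₁ᴮ / c₂ᴬ)² ‖u‖_X², i.e., the Schur complement operator S = B* A⁻¹ B satisfies ⟨S u, u⟩ ≥ c₁ˢ ‖u‖_X² with c₁ˢ = c₁ᴬ (c₁ᴮ / c₂ᴬ)². -/
open scoped RealInnerProductSpace

/-- The Schur complement operator `S = B* A⁻¹ B` is coercive: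
if `p = A⁻¹ B u`, then `⟨B u, p⟩ = ⟨S u, u⟩ ≥ c₁ᴬ (c₁ᴮ / c₂ᴬ)² ‖u‖²`. -/
theorem stmt_0
    {X Y : Type*} [NormedAddCommGroup X] [NormedSpace ℝ X]
    [NormedAddCommGroup Y] [InnerProductSpace ℝ Y]
    (A : Y →L[ℝ] StrongDual ℝ Y) (B : X →L[ℝ] StrongDual ℝ Y)
    (c₁A c₂A c₁B c₂B : ℝ)
    (hc₁A : 0 < c₁A) (hc₁B : 0 < c₁B)
    (hA2 : ∀ v : Y, ‖A v‖ ≤ c₂A * ‖v‖)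
    (hB2 : ∀ u : X, ‖B u‖ ≤ c₂B * ‖u‖)
    (hA1 : ∀ v : Y, c₁A * ‖v‖ ^ 2 ≤ A v v)
    (hinfsup : ∀ u : X, c₁B * ‖u‖ ≤ ⨆ v : {v : Y // v ≠ 0}, B u v / ‖(v : Y)‖)
    (u : X) (p : Y)
    (hp : ∀ v : Y, A p v = B u v) :
    c₁A * (c₁B / c₂A) ^ 2 * ‖u‖ ^ 2 ≤ B u p := by
  have hBp : (B u) p = (A p) p := (hp p).symm
  have hApp : c₁A * ‖p‖ ^ 2 ≤ (B u) p := hBp ▸ hA1 p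
  by_cases hY : ∃ v : Y, v ≠ 0
  · haveI : Nonempty {v : Y // v ≠ 0} := ⟨⟨hY.choose, hY.choose_spec⟩⟩
    -- c₂A > 0
    obtain ⟨v0, hv0⟩ := hY
    have hv0n : 0 < ‖v0‖ := norm_pos_iff.mpr hv0
    have hc₂A : 0 < c₂A := by
      by_contra h
      push_neg at h
      have h1 : c₁A * ‖v0‖ ^ 2 ≤ (A v0) v0 := hA1 v0
      have h2 : (A v0) v0 ≤ ‖A v0‖ * ‖v0‖ := le_trans (Real.le_norm_self _) ((A v0).le_opNorm v0)
      have h3 : ‖A v0‖ * ‖v0‖ ≤ (c₂A * ‖v0‖) * ‖v0‖ :=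
        mul_le_mul_of_nonneg_right (hA2 v0) (norm_nonneg _)
      nlinarith [mul_pos hc₁A (mul_pos hv0n hv0n),
        mul_nonneg (mul_nonneg (neg_nonneg.mpr h) hv0n.le) hv0n.le]
    -- sup ≤ ‖A p‖
    have hsup : (⨆ v : {v : Y // v ≠ 0}, (B u) v / ‖(v : Y)‖) ≤ ‖A p‖ := by
      apply ciSup_le
      intro ⟨v, hv⟩
      have hvn : 0 < ‖v‖ := norm_pos_iff.mpr hv
      rw [div_le_iff₀ hvn, ← hp v]
      exact le_trans (le_abs_self _) ((A p).le_opNorm v)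
    have key : c₁B * ‖u‖ ≤ c₂A * ‖p‖ :=
      le_trans (hinfsup u) (le_trans hsup (hA2 p))
    have hun : (c₁B / c₂A) * ‖u‖ ≤ ‖p‖ := by
      rw [div_mul_eq_mul_div, div_le_iff₀ hc₂A]
      linarith [key]
    have hsq : ((c₁B / c₂A) * ‖u‖) ^ 2 ≤ ‖p‖ ^ 2 := by
      apply sq_le_sq' _ hun
      have : 0 ≤ (c₁B / c₂A) * ‖u‖ :=
        mul_nonneg (div_nonneg hc₁B.le hc₂A.le) (norm_nonneg _)
      linarith
    calc c₁A * (c₁B / c₂A) ^ 2 * ‖u‖ ^ 2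
        = c₁A * ((c₁B / c₂A) * ‖u‖) ^ 2 := by ring
      _ ≤ c₁A * ‖p‖ ^ 2 := by nlinarith
      _ ≤ (B u) p := hApp
  · -- Y is trivial, hence the sup is over an empty type, so u = 0
    push_neg at hY
    haveI : IsEmpty {v : Y // v ≠ 0} := ⟨fun ⟨v, hv⟩ => hv (hY v)⟩
    have h0 : (⨆ v : {v : Y // v ≠ 0}, (B u) v / ‖(v : Y)‖) = 0 :=
      Real.iSup_of_isEmpty _
    have hu0 : ‖u‖ ≤ 0 := by
      have := hinfsup u
      rw [h0] at this
      nlinarith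
    have hu' : ‖u‖ = 0 := le_antisymm hu0 (norm_nonneg _)
    have : (0:ℝ) ≤ (B u) p := le_trans (by positivity) hApp
    rw [hu']
    simpa using this
end

section
/- Let p ∈ Y be the solution of ⟨A p, v⟩ = ⟨B u, v⟩ for all v ∈ Y (i.e., p = A⁻¹ B u), and set ‖u‖_S² := ⟨B u, p⟩. Then the norm equivalence inequalities c₁ˢ ‖u‖_X² ≤ ‖u‖_S² ≤ c₂ˢ ‖u‖_X² hold, with c₁ˢ = c₁ᴬ (c₁ᴮ / c₂ᴬ)² and c₂ˢ = (c₂ᴮ)² / c₁ᴬ. -/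
open scoped RealInnerProductSpace

/-- Norm equivalence for the Schur complement energy norm `‖u‖_S² = ⟨B u, p⟩`
with `p = A⁻¹ B u`: `c₁ˢ ‖u‖² ≤ ‖u‖_S² ≤ c₂ˢ ‖u‖²`,
where `c₁ˢ = c₁ᴬ (c₁ᴮ / c₂ᴬ)²` and `c₂ˢ = (c₂ᴮ)² / c₁ᴬ`. -/
theorem stmt_3
    {X Y : Type*} [NormedAddCommGroup X] [NormedSpace ℝ X]
    [NormedAddCommGroup Y] [InnerProductSpace ℝ Y]
    (A : Y →L[ℝ] StrongDual ℝ Y) (B : X →L[ℝ] StrongDual ℝ Y)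
    (c₁A c₂A c₁B c₂B : ℝ)
    (hc₁A : 0 < c₁A) (hc₁B : 0 < c₁B)
    (hA2 : ∀ v : Y, ‖A v‖ ≤ c₂A * ‖v‖)
    (hB2 : ∀ u : X, ‖B u‖ ≤ c₂B * ‖u‖)
    (hA1 : ∀ v : Y, c₁A * ‖v‖ ^ 2 ≤ A v v)
    (hinfsup : ∀ u : X, c₁B * ‖u‖ ≤ ⨆ v : {v : Y // v ≠ 0}, B u v / ‖(v : Y)‖)
    (u : X) (p : Y)
    (hp : ∀ v : Y, A p v = B u v) :
    c₁A * (c₁B / c₂A) ^ 2 * ‖u‖ ^ 2 ≤ B u p ∧ B u p ≤ (c₂B ^ 2 / c₁A) * ‖u‖ ^ 2 := by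
  have hcoer : c₁A * ‖p‖ ^ 2 ≤ B u p := by rw [← hp]; exact hA1 p
  have hBup : B u p ≤ c₂B * ‖u‖ * ‖p‖ := by
    calc B u p ≤ ‖B u‖ * ‖p‖ := (le_abs_self _).trans ((B u).le_opNorm p)
    _ ≤ c₂B * ‖u‖ * ‖p‖ := by
        exact mul_le_mul_of_nonneg_right (hB2 u) (norm_nonneg p)
  constructor
  · -- lower bound
    by_cases hY : ∃ v : Y, v ≠ 0
    · have hne : Nonempty {v : Y // v ≠ 0} := ⟨⟨hY.choose, hY.choose_spec⟩⟩
      -- c₂A > 0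
      obtain ⟨w, hw⟩ := hY
      have hwpos : (0:ℝ) < ‖w‖ := norm_pos_iff.mpr hw
      have hc₂A : 0 < c₂A := by
        have h1 : c₁A * ‖w‖ ^ 2 ≤ A w w := hA1 w
        have h2 : A w w ≤ ‖A w‖ * ‖w‖ := (le_abs_self _).trans ((A w).le_opNorm w)
        have h3 := hA2 w
        nlinarith [mul_le_mul_of_nonneg_right h3 (norm_nonneg w), sq_nonneg ‖w‖, mul_pos hwpos hwpos, sq_abs ‖w‖]
      have hsup : (⨆ v : {v : Y // v ≠ 0}, B u v / ‖(v : Y)‖) ≤ c₂A * ‖p‖ := by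
        apply ciSup_le
        intro ⟨v, hv⟩
        have hvpos : (0:ℝ) < ‖v‖ := norm_pos_iff.mpr hv
        have h1 : B u v ≤ c₂A * ‖p‖ * ‖v‖ := by
          calc B u v = A p v := (hp v).symm
          _ ≤ ‖A p‖ * ‖v‖ := (le_abs_self _).trans ((A p).le_opNorm v)
          _ ≤ c₂A * ‖p‖ * ‖v‖ := mul_le_mul_of_nonneg_right (hA2 p) (norm_nonneg v)
        exact (div_le_iff₀ hvpos).mpr h1
      have hkey : c₁B * ‖u‖ ≤ c₂A * ‖p‖ := (hinfsup u).trans hsup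
      have h4 : c₁B / c₂A * ‖u‖ ≤ ‖p‖ := by
        rw [div_mul_eq_mul_div, div_le_iff₀ hc₂A]
        linarith [hkey]
      have h5 : (c₁B / c₂A * ‖u‖) ^ 2 ≤ ‖p‖ ^ 2 := by
        apply pow_le_pow_left₀ _ h4
        positivity
      calc c₁A * (c₁B / c₂A) ^ 2 * ‖u‖ ^ 2 = c₁A * (c₁B / c₂A * ‖u‖) ^ 2 := by ring
      _ ≤ c₁A * ‖p‖ ^ 2 := by nlinarith
      _ ≤ B u p := hcoer
    · push_neg at hY
      have hsup : (⨆ v : {v : Y // v ≠ 0}, B u v / ‖(v : Y)‖) = 0 := by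
        have : IsEmpty {v : Y // v ≠ 0} := ⟨fun ⟨v, hv⟩ => hv (hY v)⟩
        exact Real.iSup_of_isEmpty _
      have hu0 : ‖u‖ = 0 := by
        have := hinfsup u
        rw [hsup] at this
        nlinarith [norm_nonneg u]
      rw [hu0]
      nlinarith [norm_nonneg p, hcoer]
  · -- upper bound
    rw [div_mul_eq_mul_div, le_div_iff₀ hc₁A]
    nlinarith [norm_nonneg p, norm_nonneg u, sq_nonneg (c₂B * ‖u‖ - c₁A * ‖p‖)]
end

section
/- For a target ū ∈ H, the solution u_ρ of the regularized variational problem satisfies the error estimate ‖ι u_ρ − ū‖_H ≤ ‖ū‖_H. -/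
open scoped RealInnerProductSpace

/-- Error estimate for `ū ∈ H`: `‖ι u_ρ − ū‖_H ≤ ‖ū‖_H`. -/
theorem stmt_7
    {H X : Type*} [NormedAddCommGroup H] [InnerProductSpace ℝ H]
    [NormedAddCommGroup X] [NormedSpace ℝ X]
    (ι : X →L[ℝ] H) (S : X →L[ℝ] StrongDual ℝ X)
    (hsym : ∀ u v : X, S u v = S v u)
    (hpsd : ∀ u : X, 0 ≤ S u u)
    (ρ : ℝ) (hρ : 0 < ρ) (ubar : H) (uρ : X)
    (hvar : ∀ v : X, ρ * S uρ v + ⟪ι uρ, ι v⟫ = ⟪ubar, ι v⟫) :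
    ‖ι uρ - ubar‖ ≤ ‖ubar‖ := by
  have h := hvar uρ
  have hkey : ‖ι uρ‖ ^ 2 ≤ ⟪ubar, ι uρ⟫ := by
    nlinarith [hpsd uρ, real_inner_self_eq_norm_sq (ι uρ)]
  have hsq : ‖ι uρ - ubar‖ ^ 2 ≤ ‖ubar‖ ^ 2 := by
    have hexp := norm_sub_sq_real (ι uρ) ubar
    have : ⟪ι uρ, ubar⟫ = ⟪ubar, ι uρ⟫ := real_inner_comm _ _
    nlinarith
  nlinarith [norm_nonneg (ι uρ - ubar), norm_nonneg ubar]
end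

section
/- If the target belongs to X, i.e., ū = ι ū₀ with ū₀ ∈ X, then the solution u_ρ of the regularized variational problem satisfies the error estimate ‖ι u_ρ − ū‖_H ≤ ρ^{1/2} ‖ū₀‖_S, where ‖ū₀‖_S = √⟨S ū₀, ū₀⟩. -/
open scoped RealInnerProductSpace

/-- Cauchy–Schwarz for a symmetric psd bilinear form. -/
lemma cs_aux {X : Type*} [NormedAddCommGroup X] [NormedSpace ℝ X]
    (S : X →L[ℝ] StrongDual ℝ X)
    (hsym : ∀ u v : X, S u v = S v u)
    (hpsd : ∀ u : X, 0 ≤ S u u) (u v : X) :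
    (S u v) ^ 2 ≤ S u u * S v v := by
  have h : ∀ t : ℝ, 0 ≤ S v v * (t * t) + (2 * S u v) * t + S u u := by
    intro t
    have := hpsd (t • v + u)
    have e1 : S (t • v + u) (t • v + u)
        = S v v * (t * t) + (2 * S u v) * t + S u u := by
      simp [map_add, map_smul, ContinuousLinearMap.add_apply,
        ContinuousLinearMap.smul_apply, smul_eq_mul, hsym v u]
      ring
    rw [e1] at this; linarith
  have hd := discrim_le_zero (a := S v v) (b := 2 * S u v) (c := S u u) h
  unfold discrim at hd
  nlinarith [hd]

/-- If the target belongs to `X`, i.e. `ū = ι ū₀`, then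
`‖ι u_ρ − ū‖_H ≤ ρ^{1/2} ‖ū₀‖_S`, where `‖ū₀‖_S = √⟨S ū₀, ū₀⟩`. -/
theorem stmt_9
    {H X : Type*} [NormedAddCommGroup H] [InnerProductSpace ℝ H]
    [NormedAddCommGroup X] [NormedSpace ℝ X]
    (ι : X →L[ℝ] H) (S : X →L[ℝ] StrongDual ℝ X)
    (hsym : ∀ u v : X, S u v = S v u)
    (hpsd : ∀ u : X, 0 ≤ S u u)
    (ρ : ℝ) (hρ : 0 < ρ) (ubar : H) (uρ : X)
    (hvar : ∀ v : X, ρ * S uρ v + ⟪ι uρ, ι v⟫ = ⟪ubar, ι v⟫)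
    (ubar₀ : X) (htarget : ubar = ι ubar₀) :
    ‖ι uρ - ubar‖ ≤ Real.sqrt ρ * Real.sqrt (S ubar₀ ubar₀) := by
  subst htarget
  set e := uρ - ubar₀ with he
  have hιe : ι uρ - ι ubar₀ = ι e := by rw [he, map_sub]
  have hv := hvar e
  have hsum : ρ * S uρ e + ⟪ι uρ - ι ubar₀, ι e⟫ = 0 := by
    rw [inner_sub_left]; linarith
  have hsplit : S uρ e = S e e + S ubar₀ e := by
    have : uρ = e + ubar₀ := by rw [he]; abel
    rw [this, map_add, ContinuousLinearMap.add_apply]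
  rw [hιe] at hsum
  have hnormsq : ‖ι uρ - ι ubar₀‖ ^ 2 = -(ρ * S uρ e) := by
    rw [hιe, ← real_inner_self_eq_norm_sq]; linarith [hsum]
  set A := S ubar₀ ubar₀ with hA
  set B := S e e with hB
  have hA0 : 0 ≤ A := hpsd _
  have hB0 : 0 ≤ B := hpsd _
  have hcs : (S ubar₀ e) ^ 2 ≤ A * B := cs_aux S hsym hpsd _ _
  -- bound: ‖ι uρ - ι ubar₀‖² ≤ ρ * A
  have key : ‖ι uρ - ι ubar₀‖ ^ 2 ≤ ρ * A := by
    have sA := Real.sq_sqrt hA0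
    have sB := Real.sq_sqrt hB0
    have sA0 := Real.sqrt_nonneg A
    have sB0 := Real.sqrt_nonneg B
    have habs : -(S ubar₀ e) ≤ Real.sqrt A * Real.sqrt B := by
      have h1 : -(S ubar₀ e) ≤ |S ubar₀ e| := neg_le_abs _
      have h2 : |S ubar₀ e| = Real.sqrt ((S ubar₀ e) ^ 2) :=
        (Real.sqrt_sq_eq_abs _).symm
      have h3 : Real.sqrt ((S ubar₀ e) ^ 2) ≤ Real.sqrt (A * B) :=
        Real.sqrt_le_sqrt hcs
      have h4 : Real.sqrt (A * B) = Real.sqrt A * Real.sqrt B :=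
        Real.sqrt_mul hA0 B
      linarith [h2 ▸ h1, h4 ▸ h3]
    rw [hnormsq, hsplit]
    have : Real.sqrt A * Real.sqrt B - B ≤ A := by
      nlinarith [sq_nonneg (Real.sqrt A - Real.sqrt B)]
    nlinarith
  have := Real.sqrt_le_sqrt key
  rwa [Real.sqrt_sq (norm_nonneg _), Real.sqrt_mul hρ.le] at this
end

section
/- If the target belongs to X, i.e., ū = ι ū₀ with ū₀ ∈ X, then the solution u_ρ of the regularized variational problem satisfies the error estimate in the energy seminorm ‖u_ρ − ū₀‖_S ≤ ‖ū₀‖_S, where ‖w‖_S = √⟨S w, w⟩. -/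
open scoped RealInnerProductSpace

lemma cs_psd {X : Type*} [NormedAddCommGroup X] [NormedSpace ℝ X]
    (S : X →L[ℝ] StrongDual ℝ X)
    (hsym : ∀ u v : X, S u v = S v u)
    (hpsd : ∀ u : X, 0 ≤ S u u) (u v : X) :
    (S u v)^2 ≤ S u u * S v v := by
  have key : ∀ t : ℝ, 0 ≤ (S v v) * (t * t) + (2 * S u v) * t + S u u := by
    intro t
    have h := hpsd (u + t • v)
    have expand : S (u + t • v) (u + t • v)
        = S v v * (t * t) + 2 * S u v * t + S u u := by
      simp only [map_add, map_smul, ContinuousLinearMap.add_apply,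
        ContinuousLinearMap.coe_smul', Pi.smul_apply, smul_eq_mul, hsym v u]
      ring
    linarith [expand ▸ h]
  have hd := discrim_le_zero (a := S v v) (b := 2 * S u v) (c := S u u) key
  unfold discrim at hd
  nlinarith [hd]

/-- If the target belongs to `X`, i.e. `ū = ι ū₀`, then
`‖u_ρ − ū₀‖_S ≤ ‖ū₀‖_S`, where `‖w‖_S = √⟨S w, w⟩`. -/
theorem stmt_10
    {H X : Type*} [NormedAddCommGroup H] [InnerProductSpace ℝ H]
    [NormedAddCommGroup X] [NormedSpace ℝ X]
    (ι : X →L[ℝ] H) (S : X →L[ℝ] StrongDual ℝ X)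
    (hsym : ∀ u v : X, S u v = S v u)
    (hpsd : ∀ u : X, 0 ≤ S u u)
    (ρ : ℝ) (hρ : 0 < ρ) (ubar : H) (uρ : X)
    (hvar : ∀ v : X, ρ * S uρ v + ⟪ι uρ, ι v⟫ = ⟪ubar, ι v⟫)
    (ubar₀ : X) (htarget : ubar = ι ubar₀) :
    Real.sqrt (S (uρ - ubar₀) (uρ - ubar₀)) ≤ Real.sqrt (S ubar₀ ubar₀) := by
  set e := uρ - ubar₀ with he
  -- ρ * S uρ e = -‖ι e‖²
  have h1 : ρ * S uρ e = -‖ι e‖^2 := by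
    have h := hvar e
    rw [htarget] at h
    have : (⟪ι ubar₀, ι e⟫ : ℝ) - ⟪ι uρ, ι e⟫ = ⟪ι ubar₀ - ι uρ, ι e⟫ := by
      rw [inner_sub_left]
    have h2 : ι ubar₀ - ι uρ = -(ι e) := by
      rw [he]; simp
    rw [h2] at this
    rw [inner_neg_left, real_inner_self_eq_norm_sq] at this
    linarith
  have hSue : S uρ e ≤ 0 := by
    nlinarith [sq_nonneg ‖ι e‖]
  -- S e e ≤ - S ubar₀ e
  have hexp : S e e = S uρ e - S ubar₀ e := by
    rw [he]
    simp only [map_sub, ContinuousLinearMap.sub_apply]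
    linarith [hsym ubar₀ uρ]
  have hE : (0:ℝ) ≤ S e e := hpsd e
  have hA : (0:ℝ) ≤ S ubar₀ ubar₀ := hpsd ubar₀
  have hcs := cs_psd S hsym hpsd ubar₀ e
  have hEleq : S e e ≤ -(S ubar₀ e) := by linarith
  by_contra hcon
  push_neg at hcon
  have hsE := Real.sq_sqrt hE
  have hsA := Real.sq_sqrt hA
  have h0 : 0 ≤ Real.sqrt (S ubar₀ ubar₀) := Real.sqrt_nonneg _
  nlinarith [mul_self_le_mul_self hE hEleq, mul_self_lt_mul_self h0 hcon,
    mul_pos (lt_of_le_of_lt h0 hcon) (lt_of_le_of_lt h0 hcon)]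
end

section
/- Suppose the target belongs to X, i.e., ū = ι ū₀ with ū₀ ∈ X, and in addition S ū₀ is represented in H, i.e., there exists g ∈ H with ⟨S ū₀, v⟩ = ⟨g, ι v⟩_H for all v ∈ X. Then the solution u_ρ of the regularized variational problem satisfies ‖ι u_ρ − ū‖_H ≤ ρ ‖g‖_H. -/
open scoped RealInnerProductSpace

/-- If `ū = ι ū₀` and `S ū₀` is represented in `H` by `g`, then
`‖ι u_ρ − ū‖_H ≤ ρ ‖g‖_H`. -/
theorem stmt_11
    {H X : Type*} [NormedAddCommGroup H] [InnerProductSpace ℝ H]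
    [NormedAddCommGroup X] [NormedSpace ℝ X]
    (ι : X →L[ℝ] H) (S : X →L[ℝ] StrongDual ℝ X)
    (hsym : ∀ u v : X, S u v = S v u)
    (hpsd : ∀ u : X, 0 ≤ S u u)
    (ρ : ℝ) (hρ : 0 < ρ) (ubar : H) (uρ : X)
    (hvar : ∀ v : X, ρ * S uρ v + ⟪ι uρ, ι v⟫ = ⟪ubar, ι v⟫)
    (ubar₀ : X) (htarget : ubar = ι ubar₀)
    (g : H) (hg : ∀ v : X, S ubar₀ v = ⟪g, ι v⟫) :
    ‖ι uρ - ubar‖ ≤ ρ * ‖g‖ := by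
  set e : X := uρ - ubar₀ with he
  have hie : ι uρ - ubar = ι e := by
    rw [htarget, he, map_sub]
  have hkey : ρ * S uρ e + ⟪ι e, ι e⟫ = 0 := by
    have h := hvar e
    have h2 : ⟪ι e, ι e⟫ = ⟪ι uρ, ι e⟫ - ⟪ubar, ι e⟫ := by
      rw [← hie, inner_sub_left]
    linarith
  have hSe : S uρ e = S e e + ⟪g, ι e⟫ := by
    have : uρ = e + ubar₀ := by simp [he]
    rw [this, map_add, ContinuousLinearMap.add_apply, hg]
  have hsq : ‖ι e‖ ^ 2 ≤ ρ * ‖g‖ * ‖ι e‖ := by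
    have h1 : ‖ι e‖ ^ 2 = ⟪ι e, ι e⟫ := (real_inner_self_eq_norm_sq _).symm
    have h2 : ⟪ι e, ι e⟫ = -(ρ * S e e) - ρ * ⟪g, ι e⟫ := by
      rw [hSe] at hkey; linarith
    have h3 : -(ρ * ⟪g, ι e⟫) ≤ ρ * (‖g‖ * ‖ι e‖) := by
      have := abs_real_inner_le_norm g (ι e)
      have hle : -⟪g, ι e⟫ ≤ ‖g‖ * ‖ι e‖ := by
        cases abs_le.mp this with
        | intro hl hr => linarith
      nlinarith
    have h4 : 0 ≤ ρ * S e e := mul_nonneg hρ.le (hpsd e)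
    nlinarith
  rw [hie]
  rcases eq_or_lt_of_le (norm_nonneg (ι e)) with h0 | h0
  · rw [← h0]; positivity
  · nlinarith
end

section
/- Suppose the target belongs to X, i.e., ū = ι ū₀ with ū₀ ∈ X, and in addition S ū₀ is represented in H, i.e., there exists g ∈ H with ⟨S ū₀, v⟩ = ⟨g, ι v⟩_H for all v ∈ X. Then the solution u_ρ of the regularized variational problem satisfies the energy seminorm estimate ‖u_ρ − ū₀‖_S ≤ ρ^{1/2} ‖g‖_H, where ‖w‖_S = √⟨S w, w⟩. -/
open scoped RealInnerProductSpace

/-- If `ū = ι ū₀` and `S ū₀` is represented in `H` by `g`, then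
`‖u_ρ − ū₀‖_S ≤ ρ^{1/2} ‖g‖_H`, where `‖w‖_S = √⟨S w, w⟩`. -/
theorem stmt_12
    {H X : Type*} [NormedAddCommGroup H] [InnerProductSpace ℝ H]
    [NormedAddCommGroup X] [NormedSpace ℝ X]
    (ι : X →L[ℝ] H) (S : X →L[ℝ] StrongDual ℝ X)
    (hsym : ∀ u v : X, S u v = S v u)
    (hpsd : ∀ u : X, 0 ≤ S u u)
    (ρ : ℝ) (hρ : 0 < ρ) (ubar : H) (uρ : X)
    (hvar : ∀ v : X, ρ * S uρ v + ⟪ι uρ, ι v⟫ = ⟪ubar, ι v⟫)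
    (ubar₀ : X) (htarget : ubar = ι ubar₀)
    (g : H) (hg : ∀ v : X, S ubar₀ v = ⟪g, ι v⟫) :
    Real.sqrt (S (uρ - ubar₀) (uρ - ubar₀)) ≤ Real.sqrt ρ * ‖g‖ := by
  set e := uρ - ubar₀ with he
  have h1 := hvar e
  rw [htarget] at h1
  have hιe : ι e = ι uρ - ι ubar₀ := by simp [he]
  have hSe : S e e = S uρ e - S ubar₀ e := by simp [he]
  have hnorm : ⟪ι uρ, ι e⟫ - ⟪ι ubar₀, ι e⟫ = ‖ι e‖ ^ 2 := by
    rw [← inner_sub_left, ← hιe, real_inner_self_eq_norm_sq]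
  have hge := hg e
  have key : ρ * S e e = -‖ι e‖ ^ 2 - ρ * ⟪g, ι e⟫ := by
    rw [hSe, hge]; nlinarith [h1, hnorm]
  have hcs : -⟪g, ι e⟫ ≤ ‖g‖ * ‖ι e‖ := by
    have := abs_real_inner_le_norm g (ι e)
    linarith [neg_abs_le (⟪g, ι e⟫ : ℝ)]
  have hSle : S e e ≤ ρ * ‖g‖ ^ 2 := by
    nlinarith [sq_nonneg (‖ι e‖ - ρ * ‖g‖ / 2), hρ.le, sq_nonneg (ρ * ‖g‖),
      mul_pos hρ hρ, sq_nonneg ‖g‖]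
  calc Real.sqrt (S e e) ≤ Real.sqrt (ρ * ‖g‖ ^ 2) := Real.sqrt_le_sqrt hSle
    _ = Real.sqrt ρ * ‖g‖ := by
        rw [Real.sqrt_mul hρ.le, Real.sqrt_sq (norm_nonneg g)]
end

section
/- Let X_h be a subspace of X and let u_{ρh} ∈ X_h be the Galerkin solution, i.e., ρ ⟨S u_{ρh}, v_h⟩ + ⟨ι u_{ρh}, ι v_h⟩_H = ⟨ū, ι v_h⟩_H for all v_h ∈ X_h. Then the Cea-type a priori error estimate holds: for every v_h ∈ X_h, ‖ι(u_ρ − u_{ρh})‖_H ≤ √( ρ ⟨S(u_ρ − v_h), u_ρ − v_h⟩ + ‖ι(u_ρ − v_h)‖_H² ). -/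
open scoped RealInnerProductSpace

/-- Cea-type a priori estimate for the Galerkin solution `u_{ρh} ∈ X_h`:
for every `v_h ∈ X_h`,
`‖ι(u_ρ − u_{ρh})‖_H ≤ √(ρ ⟨S(u_ρ − v_h), u_ρ − v_h⟩ + ‖ι(u_ρ − v_h)‖²)`. -/
theorem stmt_13
    {H X : Type*} [NormedAddCommGroup H] [InnerProductSpace ℝ H]
    [NormedAddCommGroup X] [NormedSpace ℝ X]
    (ι : X →L[ℝ] H) (S : X →L[ℝ] StrongDual ℝ X)
    (hsym : ∀ u v : X, S u v = S v u)
    (hpsd : ∀ u : X, 0 ≤ S u u)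
    (ρ : ℝ) (hρ : 0 < ρ) (ubar : H) (uρ : X)
    (hvar : ∀ v : X, ρ * S uρ v + ⟪ι uρ, ι v⟫ = ⟪ubar, ι v⟫)
    (Xh : Submodule ℝ X) (uρh : X) (huρh : uρh ∈ Xh)
    (hgal : ∀ vh ∈ Xh, ρ * S uρh vh + ⟪ι uρh, ι vh⟫ = ⟪ubar, ι vh⟫) :
    ∀ vh ∈ Xh,
      ‖ι (uρ - uρh)‖ ≤
        Real.sqrt (ρ * S (uρ - vh) (uρ - vh) + ‖ι (uρ - vh)‖ ^ 2) := by
  intro vh hvh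
  set a : X → X → ℝ := fun u v => ρ * S u v + ⟪ι u, ι v⟫ with ha
  have ha_sub_left : ∀ u v w : X, a (u - v) w = a u w - a v w := by
    intro u v w
    simp only [ha, map_sub, ContinuousLinearMap.sub_apply, inner_sub_left]
    ring
  have ha_sub_right : ∀ u v w : X, a u (v - w) = a u v - a u w := by
    intro u v w
    simp only [ha, map_sub, inner_sub_right]
    ring
  have ha_smul_left : ∀ (t : ℝ) (u v : X), a (t • u) v = t * a u v := by
    intro t u v
    simp only [ha, map_smul, ContinuousLinearMap.smul_apply, inner_smul_left,
      RCLike.conj_to_real, smul_eq_mul]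
    ring
  have ha_sym : ∀ u v : X, a u v = a v u := by
    intro u v
    simp only [ha, hsym u v, real_inner_comm]
  have ha_smul_right : ∀ (t : ℝ) (u v : X), a u (t • v) = t * a u v := by
    intro t u v
    rw [ha_sym, ha_smul_left, ha_sym]
  have ha_add_left : ∀ u v w : X, a (u + v) w = a u w + a v w := by
    intro u v w
    simp only [ha, map_add, ContinuousLinearMap.add_apply, inner_add_left]
    ring
  have ha_add_right : ∀ u v w : X, a u (v + w) = a u v + a u w := by
    intro u v w
    rw [ha_sym, ha_add_left, ha_sym u v, ha_sym u w]
  have ha_nonneg : ∀ u : X, 0 ≤ a u u := by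
    intro u
    have h1 : 0 ≤ ρ * S u u := mul_nonneg hρ.le (hpsd u)
    have h2 : (0:ℝ) ≤ ⟪ι u, ι u⟫ := real_inner_self_nonneg
    simpa [ha] using add_nonneg h1 h2
  -- Galerkin orthogonality
  have horth : ∀ wh ∈ Xh, a (uρ - uρh) wh = 0 := by
    intro wh hwh
    have h1 := hvar wh
    have h2 := hgal wh hwh
    rw [ha_sub_left]
    simp only [ha]
    linarith
  set e := uρ - uρh with he
  set w := uρ - vh with hw
  -- a e e = a e w
  have key : a e e = a e w := by
    have hmem : vh - uρh ∈ Xh := Xh.sub_mem hvh huρh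
    have : a e (e - w) = 0 := by
      have : e - w = vh - uρh := by rw [he, hw]; abel
      rw [this]
      exact horth _ hmem
    rw [ha_sub_right] at this
    linarith
  -- Cauchy-Schwarz: (a e w)^2 ≤ a e e * a w w
  have hcs : a e w * a e w ≤ a e e * a w w := by
    have hq : ∀ t : ℝ, 0 ≤ a w w * (t * t) + (2 * a e w) * t + a e e := by
      intro t
      have := ha_nonneg (e + t • w)
      simp only [ha_add_left, ha_add_right, ha_smul_left, ha_smul_right] at this
      rw [ha_sym w e] at this
      ring_nf at this ⊢
      linarith
    have := discrim_le_zero hq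
    rw [discrim] at this
    nlinarith
  have haww : a e e ≤ a w w := by
    rcases eq_or_lt_of_le (ha_nonneg e) with h0 | h0
    · rw [← h0]; exact ha_nonneg w
    · rw [← key] at hcs
      exact le_of_mul_le_mul_left hcs h0
  -- conclude
  have hnorm : ‖ι e‖ ^ 2 ≤ a e e := by
    have h1 : 0 ≤ ρ * S e e := mul_nonneg hρ.le (hpsd e)
    have : a e e = ρ * S e e + ‖ι e‖ ^ 2 := by
      simp [ha, real_inner_self_eq_norm_sq]
    linarith
  have haw_eq : a w w = ρ * S w w + ‖ι w‖ ^ 2 := by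
    simp [ha, real_inner_self_eq_norm_sq]
  calc ‖ι e‖ = Real.sqrt (‖ι e‖ ^ 2) := by rw [Real.sqrt_sq (norm_nonneg _)]
    _ ≤ Real.sqrt (a w w) := Real.sqrt_le_sqrt (hnorm.trans haww)
    _ = Real.sqrt (ρ * S w w + ‖ι w‖ ^ 2) := by rw [haw_eq]
end

section
/- Let X_h be a subspace of X and let u_{ρh} ∈ X_h be the Galerkin solution, i.e., ρ ⟨S u_{ρh}, v_h⟩ + ⟨ι u_{ρh}, ι v_h⟩_H = ⟨ū, ι v_h⟩_H for all v_h ∈ X_h. Then, for a target ū ∈ H, the abstract error estimate ‖ι u_{ρh} − ū‖_H ≤ (1 + √2) ‖ū‖_H holds. -/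
open scoped RealInnerProductSpace

/-- Abstract error estimate for the Galerkin solution and a target `ū ∈ H`:
`‖ι u_{ρh} − ū‖_H ≤ (1 + √2) ‖ū‖_H`. -/
theorem stmt_14
    {H X : Type*} [NormedAddCommGroup H] [InnerProductSpace ℝ H]
    [NormedAddCommGroup X] [NormedSpace ℝ X]
    (ι : X →L[ℝ] H) (S : X →L[ℝ] StrongDual ℝ X)
    (hsym : ∀ u v : X, S u v = S v u)
    (hpsd : ∀ u : X, 0 ≤ S u u)
    (ρ : ℝ) (hρ : 0 < ρ) (ubar : H) (uρ : X)
    (hvar : ∀ v : X, ρ * S uρ v + ⟪ι uρ, ι v⟫ = ⟪ubar, ι v⟫)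
    (Xh : Submodule ℝ X) (uρh : X) (huρh : uρh ∈ Xh)
    (hgal : ∀ vh ∈ Xh, ρ * S uρh vh + ⟪ι uρh, ι vh⟫ = ⟪ubar, ι vh⟫) :
    ‖ι uρh - ubar‖ ≤ (1 + Real.sqrt 2) * ‖ubar‖ := by
  have h1 := hgal uρh huρh
  have hρS : 0 ≤ ρ * S uρh uρh := mul_nonneg hρ.le (hpsd uρh)
  have h2 : ‖ι uρh‖ ^ 2 ≤ ‖ubar‖ * ‖ι uρh‖ := by
    have := real_inner_le_norm ubar (ι uρh)
    have hself : ⟪ι uρh, ι uρh⟫ = ‖ι uρh‖ ^ 2 := real_inner_self_eq_norm_sq _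
    nlinarith
  have h3 : ‖ι uρh‖ ≤ ‖ubar‖ := by
    rcases eq_or_lt_of_le (norm_nonneg (ι uρh)) with h | h
    · rw [← h]; exact norm_nonneg _
    · nlinarith
  have h4 : ‖ι uρh - ubar‖ ≤ ‖ι uρh‖ + ‖ubar‖ := norm_sub_le _ _
  have h5 : (1 : ℝ) ≤ Real.sqrt 2 := by
    rw [show (1:ℝ) = Real.sqrt 1 by simp]
    exact Real.sqrt_le_sqrt (by norm_num)
  nlinarith [norm_nonneg ubar]
end

section
/- Let S̃ : X → X* be a continuous linear operator with ⟨S̃ w, w⟩ ≥ 0 for all w ∈ X, let X_h be a subspace of X, and let ũ ∈ X_h satisfy the perturbed Galerkin equation ρ ⟨S̃ ũ, v_h⟩ + ⟨ι ũ, ι v_h⟩_H = ⟨ū, ι v_h⟩_H for all v_h ∈ X_h. Then ‖ι ũ − ū‖_H ≤ ‖ū‖_H. -/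
open scoped RealInnerProductSpace

/-- Stability of the perturbed Galerkin solution: if `S̃` is positive
semidefinite and `ũ ∈ X_h` solves the perturbed Galerkin equation, then
`‖ι ũ − ū‖_H ≤ ‖ū‖_H`. -/
theorem stmt_16
    {H X : Type*} [NormedAddCommGroup H] [InnerProductSpace ℝ H]
    [NormedAddCommGroup X] [NormedSpace ℝ X]
    (ι : X →L[ℝ] H)
    (Stilde : X →L[ℝ] StrongDual ℝ X)
    (hpsd : ∀ w : X, 0 ≤ Stilde w w)
    (ρ : ℝ) (hρ : 0 < ρ) (ubar : H)
    (Xh : Submodule ℝ X) (ut : X) (hut : ut ∈ Xh)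
    (hpert : ∀ vh ∈ Xh, ρ * Stilde ut vh + ⟪ι ut, ι vh⟫ = ⟪ubar, ι vh⟫) :
    ‖ι ut - ubar‖ ≤ ‖ubar‖ := by
  have h := hpert ut hut
  have hps := hpsd ut
  have hinn : ⟪ι ut, ι ut⟫ = ‖ι ut‖ ^ 2 := real_inner_self_eq_norm_sq _
  have h1 : ‖ι ut‖ ^ 2 ≤ ⟪ubar, ι ut⟫ := by nlinarith
  have hsq : ‖ι ut - ubar‖ ^ 2 ≤ ‖ubar‖ ^ 2 := by
    have hexp := norm_sub_sq_real (ι ut) ubar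
    have hsymm : ⟪ι ut, ubar⟫ = ⟪ubar, ι ut⟫ := real_inner_comm _ _
    nlinarith [sq_nonneg ‖ι ut‖]
  nlinarith [norm_nonneg (ι ut - ubar), norm_nonneg ubar]
end

section
/- Let X_h be a subspace of X on which the inverse inequality ‖v_h‖_X ≤ c_I h^{-1} ‖ι v_h‖_H holds for all v_h ∈ X_h, with constants c_I > 0 and h > 0. Let u_{ρh} ∈ X_h satisfy ρ ⟨S u_{ρh}, v_h⟩ + ⟨ι u_{ρh}, ι v_h⟩_H = ⟨ū, ι v_h⟩_H for all v_h ∈ X_h, and let ũ_{ρh} ∈ X_h satisfy the perturbed equation ρ ⟨S̃ ũ_{ρh}, v_h⟩ + ⟨ι ũ_{ρh}, ι v_h⟩_H = ⟨ū, ι v_h⟩_H for all v_h ∈ X_h. Then ‖ι(ũ_{ρh} − u_{ρh})‖_H ≤ c_I ρ h^{-1} ‖(S − S̃) u_{ρh}‖_{X*}. -/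
open scoped RealInnerProductSpace

/-- Perturbation estimate: if the inverse inequality
`‖v_h‖_X ≤ c_I h⁻¹ ‖ι v_h‖_H` holds on `X_h`, `u_{ρh} ∈ X_h` is the Galerkin
solution and `ũ_{ρh} ∈ X_h` the perturbed Galerkin solution, then
`‖ι(ũ_{ρh} − u_{ρh})‖_H ≤ c_I ρ h⁻¹ ‖(S − S̃) u_{ρh}‖_{X*}`. -/
theorem stmt_17
    {H X : Type*} [NormedAddCommGroup H] [InnerProductSpace ℝ H]
    [NormedAddCommGroup X] [NormedSpace ℝ X]
    (ι : X →L[ℝ] H)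
    (S Stilde : X →L[ℝ] StrongDual ℝ X)
    (hpsd : ∀ w : X, 0 ≤ Stilde w w)
    (ρ : ℝ) (hρ : 0 < ρ) (ubar : H)
    (Xh : Submodule ℝ X) (cI h : ℝ) (hcI : 0 < cI) (hh : 0 < h)
    (hinv : ∀ vh ∈ Xh, ‖vh‖ ≤ cI * h⁻¹ * ‖ι vh‖)
    (uρh : X) (huρh : uρh ∈ Xh)
    (hgal : ∀ vh ∈ Xh, ρ * S uρh vh + ⟪ι uρh, ι vh⟫ = ⟪ubar, ι vh⟫)
    (utρh : X) (hutρh : utρh ∈ Xh)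
    (hpert : ∀ vh ∈ Xh, ρ * Stilde utρh vh + ⟪ι utρh, ι vh⟫ = ⟪ubar, ι vh⟫) :
    ‖ι (utρh - uρh)‖ ≤ cI * ρ * h⁻¹ * ‖S uρh - Stilde uρh‖ := by
  set e : X := utρh - uρh with he
  have heXh : e ∈ Xh := Xh.sub_mem hutρh huρh
  -- subtract the two equations tested with e
  have key : ⟪ι e, ι e⟫ = ρ * (S uρh e - Stilde utρh e) := by
    have h1 := hgal e heXh
    have h2 := hpert e heXh
    have : ρ * Stilde utρh e + ⟪ι utρh, ι e⟫
        = ρ * S uρh e + ⟪ι uρh, ι e⟫ := by rw [h1, h2]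
    have hsub : ⟪ι utρh, ι e⟫ - ⟪ι uρh, ι e⟫ = ρ * S uρh e - ρ * Stilde utρh e := by
      linarith
    calc ⟪ι e, ι e⟫ = ⟪ι utρh - ι uρh, ι e⟫ := by rw [he]; simp
      _ = ⟪ι utρh, ι e⟫ - ⟪ι uρh, ι e⟫ := by rw [inner_sub_left]
      _ = ρ * (S uρh e - Stilde utρh e) := by rw [hsub]; ring
  have hSd : S uρh e - Stilde utρh e ≤ (S uρh - Stilde uρh) e := by
    have : (S uρh - Stilde uρh) e = S uρh e - Stilde uρh e := by simp
    rw [this]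
    have h2 : Stilde utρh e - Stilde uρh e = Stilde e e := by
      have := map_sub Stilde utρh uρh
      rw [← he] at this
      have := congrArg (fun f => f e) this
      simp at this
      linarith
    have := hpsd e
    linarith
  have hbound : ⟪ι e, ι e⟫ ≤ ρ * (‖S uρh - Stilde uρh‖ * (cI * h⁻¹ * ‖ι e‖)) := by
    rw [key]
    apply mul_le_mul_of_nonneg_left _ hρ.le
    calc S uρh e - Stilde utρh e ≤ (S uρh - Stilde uρh) e := hSd
      _ ≤ ‖S uρh - Stilde uρh‖ * ‖e‖ := le_trans (le_abs_self _)
          ((S uρh - Stilde uρh).le_opNorm e)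
      _ ≤ ‖S uρh - Stilde uρh‖ * (cI * h⁻¹ * ‖ι e‖) :=
          mul_le_mul_of_nonneg_left (hinv e heXh) (norm_nonneg _)
  have hsq : ‖ι e‖ * ‖ι e‖ ≤ (cI * ρ * h⁻¹ * ‖S uρh - Stilde uρh‖) * ‖ι e‖ := by
    have := real_inner_self_eq_norm_mul_norm (ι e)
    nlinarith [hbound]
  rcases eq_or_lt_of_le (norm_nonneg (ι e)) with h0 | h0
  · rw [← h0]
    positivity
  · exact le_of_mul_le_mul_right hsq h0
end
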